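/- There exist a₀ > 0 and C > 0 such that for every real a ≥ a₀ there is a unique b ∈ ℝ with Im ∫_{−1}^{1} √((a + i·b) − i·x²) dx = 0, and this unique b satisfies |b − 1/3| ≤ C/a, where √ denotes the principal branch of the complex square root. -/

import Mathlib

open Complex MeasureTheory intervalIntegral Set

noncomputable def Usq (a y : ℝ) : ℝ := Real.sqrt ((Real.sqrt (a^2+y^2)+a)/2)
noncomputable def gfun (a y : ℝ) : ℝ := y / (2 * Usq a y)

lemma s_ge (a y : ℝ) (ha : 0 < a) : a ≤ Real.sqrt (a^2+y^2) := by
  have := Real.sqrt_le_sqrt (show a^2 ≤ a^2 + y^2 by nlinarith)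
  rwa [Real.sqrt_sq ha.le] at this

lemma U_sq (a y : ℝ) (ha : 0 < a) : (Usq a y)^2 = (Real.sqrt (a^2+y^2)+a)/2 := by
  have := s_ge a y ha
  exact Real.sq_sqrt (by linarith)

lemma sqrt_le_U (a y : ℝ) (ha : 0 < a) : Real.sqrt a ≤ Usq a y := by
  apply Real.sqrt_le_sqrt
  have := s_ge a y ha
  linarith

lemma U_pos (a y : ℝ) (ha : 0 < a) : 0 < Usq a y :=
  lt_of_lt_of_le (Real.sqrt_pos.2 ha) (sqrt_le_U a y ha)

lemma U_sq_le (a y : ℝ) (ha : 0 < a) : (Usq a y)^2 ≤ a + |y|/2 := by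
  rw [U_sq a y ha]
  have h : Real.sqrt (a^2+y^2) ≤ a + |y| := by
    have : a^2 + y^2 ≤ (a + |y|)^2 := by nlinarith [abs_nonneg y, _root_.sq_abs y]
    calc Real.sqrt (a^2+y^2) ≤ Real.sqrt ((a+|y|)^2) := Real.sqrt_le_sqrt this
      _ = a + |y| := Real.sqrt_sq (by positivity)
  linarith

lemma cpow_half_eq (a y : ℝ) (ha : 0 < a) :
    ((a:ℂ) + (y:ℂ)*Complex.I)^(1/2:ℂ) = (Usq a y : ℂ) + (gfun a y : ℂ)*Complex.I := by
  set z : ℂ := (a:ℂ) + (y:ℂ)*Complex.I with hzdef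
  have hz_re : z.re = a := by simp [hzdef]
  have hz0 : z ≠ 0 := by
    intro h; rw [h] at hz_re; simp at hz_re; linarith
  have hw : (z^(1/2:ℂ))^2 = z := by
    rw [sq, ← Complex.cpow_add _ _ hz0]; norm_num
  have hwre : 0 < (z^(1/2:ℂ)).re := by
    rw [Complex.cpow_def_of_ne_zero hz0, Complex.exp_re]
    apply mul_pos (Real.exp_pos _)
    apply Real.cos_pos_of_mem_Ioo
    have harg : |z.arg| < Real.pi / 2 :=
      Complex.abs_arg_lt_pi_div_two_iff.2 (Or.inl (by rw [hz_re]; exact ha))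
    rw [abs_lt] at harg
    have him : (Complex.log z * (1/2:ℂ)).im = z.arg / 2 := by
      simp [Complex.mul_im, Complex.log_im]
      ring
    rw [him]
    constructor <;> [linarith [harg.1]; linarith [harg.2]]
  set u := Usq a y with hu
  set g := gfun a y with hg
  have hu0 : 0 < u := U_pos a y ha
  have hu2 : u^2 = (Real.sqrt (a^2+y^2)+a)/2 := U_sq a y ha
  have hs2 : (Real.sqrt (a^2+y^2))^2 = a^2+y^2 := Real.sq_sqrt (by positivity)
  have hgval : g = y / (2*u) := rfl
  have h2ug : 2*u*g = y := by rw [hgval]; field_simp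
  have husub : u^2 - g^2 = a := by
    rw [hgval]
    have hs := s_ge a y ha
    field_simp
    nlinarith [hs2, hu2]
  have hw0 : ((u:ℂ) + (g:ℂ)*Complex.I)^2 = z := by
    apply Complex.ext
    · simp [hzdef, sq, Complex.mul_re, Complex.mul_im]
      nlinarith [husub]
    · simp [hzdef, sq, Complex.mul_re, Complex.mul_im]
      nlinarith [h2ug]
  have hsum : z^(1/2:ℂ) + ((u:ℂ) + (g:ℂ)*Complex.I) ≠ 0 := by
    intro h
    have : (z^(1/2:ℂ) + ((u:ℂ) + (g:ℂ)*Complex.I)).re = 0 := by rw [h]; simp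
    simp [Complex.add_re] at this
    linarith
  have hfac : (z^(1/2:ℂ) - ((u:ℂ) + (g:ℂ)*Complex.I)) * (z^(1/2:ℂ) + ((u:ℂ) + (g:ℂ)*Complex.I)) = 0 := by
    have : (z^(1/2:ℂ) - ((u:ℂ) + (g:ℂ)*Complex.I)) * (z^(1/2:ℂ) + ((u:ℂ) + (g:ℂ)*Complex.I))
        = (z^(1/2:ℂ))^2 - ((u:ℂ) + (g:ℂ)*Complex.I)^2 := by ring
    rw [this, hw, hw0, sub_self]
  rcases mul_eq_zero.1 hfac with h | h
  · exact sub_eq_zero.1 h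
  · exact absurd h hsum

lemma gfun_rep (a y : ℝ) (ha : 0 < a) (hy : 0 ≤ y) :
    gfun a y = Real.sqrt ((Real.sqrt (a^2+y^2) - a)/2) := by
  have hu0 := U_pos a y ha
  have hg0 : 0 ≤ gfun a y := by
    unfold gfun; positivity
  have hsq : (gfun a y)^2 = (Real.sqrt (a^2+y^2) - a)/2 := by
    unfold gfun
    have hu2 := U_sq a y ha
    have hs2 : (Real.sqrt (a^2+y^2))^2 = a^2+y^2 := Real.sq_sqrt (by positivity)
    have hs := s_ge a y ha
    field_simp
    nlinarith
  rw [← hsq, Real.sqrt_sq hg0]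

lemma U_even (a y : ℝ) : Usq a (-y) = Usq a y := by unfold Usq; rw [neg_pow]; ring_nf

lemma gfun_odd (a y : ℝ) : gfun a (-y) = - gfun a y := by
  unfold gfun; rw [U_even]; ring

lemma gfun_mono (a : ℝ) (ha : 0 < a) {y₁ y₂ : ℝ} (h : y₁ < y₂) : gfun a y₁ < gfun a y₂ := by
  have key : ∀ u v : ℝ, 0 ≤ u → u < v → gfun a u < gfun a v := by
    intro u v hu huv
    rw [gfun_rep a u ha hu, gfun_rep a v ha (hu.trans huv.le)]
    apply Real.sqrt_lt_sqrt
    · have := s_ge a u ha; linarith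
    · have : Real.sqrt (a^2+u^2) < Real.sqrt (a^2+v^2) :=
        Real.sqrt_lt_sqrt (by positivity) (by nlinarith)
      linarith
  rcases le_or_gt 0 y₁ with h1 | h1
  · exact key y₁ y₂ h1 h
  · rcases lt_or_ge y₂ 0 with h2 | h2
    · have := key (-y₂) (-y₁) (by linarith) (by linarith)
      rw [gfun_odd, gfun_odd] at this; linarith
    · have hneg : gfun a y₁ < 0 := div_neg_of_neg_of_pos h1 (by have := U_pos a y₁ ha; linarith)
      have hpos : 0 ≤ gfun a y₂ := div_nonneg h2 (by have := U_pos a y₂ ha; linarith)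
      linarith

lemma gfun_est (a y : ℝ) (ha : 0 < a) :
    |gfun a y - y/(2*Real.sqrt a)| ≤ y^2/(8*a*Real.sqrt a) := by
  set r := Real.sqrt a with hr
  set u := Usq a y with hu
  have hr0 : 0 < r := Real.sqrt_pos.2 ha
  have hru : r ≤ u := sqrt_le_U a y ha
  have hu0 : 0 < u := U_pos a y ha
  have hr2 : r^2 = a := Real.sq_sqrt ha.le
  have hub : u^2 ≤ a + |y|/2 := U_sq_le a y ha
  have h1 : 4*r*(u-r) ≤ |y| := by nlinarith
  have heq : gfun a y - y/(2*r) = y*(r-u)/(2*u*r) := by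
    unfold gfun
    rw [← hu]
    field_simp
  rw [heq, abs_div, abs_mul]
  rw [abs_of_pos (by positivity : (0:ℝ) < 2*u*r)]
  rw [abs_of_nonpos (by linarith : r - u ≤ 0)]
  rw [div_le_div_iff₀ (by positivity) (by positivity)]
  have hy2 : |y|^2 = y^2 := _root_.sq_abs y
  have h2 : (2*a*|y|) * (4*r*(u-r)) ≤ (2*a*|y|)*|y| :=
    mul_le_mul_of_nonneg_left h1 (by positivity)
  have h3 : y^2*(2*r*r) ≤ y^2*(2*u*r) := mul_le_mul_of_nonneg_left (by nlinarith [mul_nonneg (sub_nonneg.2 hru) hr0.le]) (sq_nonneg y)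
  nlinarith [h2, h3]

lemma U_cont (a : ℝ) : Continuous (Usq a) := by
  unfold Usq
  fun_prop

lemma gfun_cont (a : ℝ) (ha : 0 < a) : Continuous (gfun a) := by
  unfold gfun
  exact continuous_id.div (continuous_const.mul (U_cont a))
    (fun y => by have := U_pos a y ha; positivity)

noncomputable def Ffun (a b : ℝ) : ℝ := ∫ x in (-1:ℝ)..1, gfun a (b - x^2)

lemma inner_cont (a b : ℝ) (ha : 0 < a) : Continuous fun x : ℝ => gfun a (b - x^2) :=
  (gfun_cont a ha).comp (continuous_const.sub (continuous_pow 2))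

lemma im_integral_eq (a b : ℝ) (ha : 0 < a) :
    (∫ x in (-1:ℝ)..1, ((a:ℂ)+(b:ℂ)*Complex.I - Complex.I*(x:ℂ)^2)^(1/2:ℂ)).im
      = Ffun a b := by
  have hrw : ∀ x : ℝ, ((a:ℂ)+(b:ℂ)*Complex.I - Complex.I*(x:ℂ)^2)^(1/2:ℂ)
      = (Usq a (b-x^2) : ℂ) + (gfun a (b-x^2) : ℂ)*Complex.I := by
    intro x
    have h : ((a:ℂ)+(b:ℂ)*Complex.I - Complex.I*(x:ℂ)^2) = ((a:ℂ) + ((b - x^2 : ℝ):ℂ)*Complex.I) := by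
      push_cast; ring
    rw [h, cpow_half_eq a (b-x^2) ha]
  simp_rw [hrw]
  have hf : Continuous fun x : ℝ => (Usq a (b-x^2) : ℂ) + (gfun a (b-x^2) : ℂ)*Complex.I := by
    apply Continuous.add
    · exact Complex.continuous_ofReal.comp ((U_cont a).comp (continuous_const.sub (continuous_pow 2)))
    · exact (Complex.continuous_ofReal.comp (inner_cont a b ha)).mul continuous_const
  have hkey := Complex.imCLM.intervalIntegral_comp_comm (μ := volume)
    (hf.intervalIntegrable (-1) 1)
  simp only [Complex.imCLM_apply] at hkey
  rw [← hkey]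
  unfold Ffun
  congr 1
  ext x
  simp

lemma Ffun_mono (a : ℝ) (ha : 0 < a) {b₁ b₂ : ℝ} (h : b₁ < b₂) : Ffun a b₁ < Ffun a b₂ := by
  have hpos : 0 < ∫ x in (-1:ℝ)..1, (gfun a (b₂-x^2) - gfun a (b₁-x^2)) := by
    apply intervalIntegral_pos_of_pos
    · exact ((inner_cont a b₂ ha).sub (inner_cont a b₁ ha)).intervalIntegrable _ _
    · intro x
      exact sub_pos.2 (gfun_mono a ha (by nlinarith))
    · norm_num
  rw [integral_sub ((inner_cont a b₂ ha).intervalIntegrable _ _)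
    ((inner_cont a b₁ ha).intervalIntegrable _ _)] at hpos
  unfold Ffun
  linarith

lemma Ffun_cont (a : ℝ) (ha : 0 < a) : Continuous (Ffun a) := by
  apply intervalIntegral.continuous_parametric_intervalIntegral_of_continuous'
    (f := fun b x => gfun a (b - x^2)) (μ := volume)
  exact (gfun_cont a ha).comp (continuous_fst.sub (continuous_snd.pow 2))

lemma Ffun_neg (a : ℝ) (ha : 0 < a) : Ffun a (-1) < 0 := by
  have hpos : 0 < ∫ x in (-1:ℝ)..1, (-(gfun a ((-1:ℝ)-x^2))) := by
    apply intervalIntegral_pos_of_pos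
    · exact ((inner_cont a (-1) ha).neg).intervalIntegrable _ _
    · intro x
      have h1 : gfun a ((-1:ℝ)-x^2) < gfun a 0 := gfun_mono a ha (by nlinarith)
      have h2 : gfun a 0 = 0 := by unfold gfun; simp
      linarith
    · norm_num
  rw [intervalIntegral.integral_neg] at hpos
  unfold Ffun
  linarith

lemma Ffun_pos (a : ℝ) (ha : 0 < a) : 0 < Ffun a 2 := by
  apply intervalIntegral_pos_of_pos_on
  · exact (inner_cont a 2 ha).intervalIntegrable _ _
  · intro x hx
    have h1 : gfun a 0 < gfun a ((2:ℝ)-x^2) := by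
      apply gfun_mono a ha
      rw [Set.mem_Ioo] at hx
      nlinarith [hx.1, hx.2]
    have h2 : gfun a 0 = 0 := by unfold gfun; simp
    linarith
  · norm_num

lemma lin_integral (b r : ℝ) (hr : r ≠ 0) :
    ∫ x in (-1:ℝ)..1, (b - x^2)/(2*r) = (b - 1/3)/r := by
  rw [intervalIntegral.integral_div]
  have h : ∫ x in (-1:ℝ)..1, (b - x^2) = 2*b - 2/3 := by
    rw [intervalIntegral.integral_sub intervalIntegrable_const
      ((continuous_pow 2).intervalIntegrable _ _), intervalIntegral.integral_const,
      integral_pow]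
    norm_num
  rw [h]
  field_simp

lemma zero_bound (a b : ℝ) (ha : 1 ≤ a) (hb1 : -1 ≤ b) (hb2 : b ≤ 2)
    (h0 : Ffun a b = 0) : |b - 1/3| ≤ 1/a := by
  have ha0 : 0 < a := by linarith
  set r := Real.sqrt a with hr
  have hr0 : 0 < r := Real.sqrt_pos.2 ha0
  have hcont2 : Continuous fun x : ℝ => (b - x^2)/(2*r) :=
    ((continuous_const.sub (continuous_pow 2)).div_const _)
  have hdiff : Ffun a b - (b-1/3)/r
      = ∫ x in (-1:ℝ)..1, (gfun a (b-x^2) - (b-x^2)/(2*r)) := by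
    rw [intervalIntegral.integral_sub ((inner_cont a b ha0).intervalIntegrable _ _)
      (hcont2.intervalIntegrable _ _), lin_integral b r hr0.ne']
    rfl
  have hptwise : ∀ x ∈ Icc (-1:ℝ) 1,
      |gfun a (b-x^2) - (b-x^2)/(2*r)| ≤ 4/(8*a*r) := by
    intro x hx
    refine (gfun_est a (b-x^2) ha0).trans ?_
    have hxx : x^2 ≤ 1 := by
      rw [Set.mem_Icc] at hx
      nlinarith [hx.1, hx.2]
    have hnum : (b-x^2)^2 ≤ 4 := by nlinarith [sq_nonneg x]
    gcongr
  have habs : |Ffun a b - (b-1/3)/r| ≤ 1/(a*r) := by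
    rw [hdiff]
    calc |∫ x in (-1:ℝ)..1, (gfun a (b-x^2) - (b-x^2)/(2*r))|
        ≤ ∫ x in (-1:ℝ)..1, |gfun a (b-x^2) - (b-x^2)/(2*r)| :=
          intervalIntegral.abs_integral_le_integral_abs (by norm_num)
      _ ≤ ∫ _x in (-1:ℝ)..1, 4/(8*a*r) := by
          apply intervalIntegral.integral_mono_on (by norm_num)
          · exact ((inner_cont a b ha0).sub hcont2).abs.intervalIntegrable _ _
          · exact intervalIntegrable_const
          · exact hptwise
      _ = 1/(a*r) := by
          rw [intervalIntegral.integral_const]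
          field_simp
          rw [smul_eq_mul]
          field_simp
          norm_num
  rw [h0, zero_sub, abs_neg, abs_div, abs_of_pos hr0] at habs
  have hfin : |b - 1/3| ≤ r/(a*r) := by
    calc |b-1/3| = (|b-1/3|/r)*r := by field_simp
      _ ≤ (1/(a*r))*r := mul_le_mul_of_nonneg_right habs hr0.le
      _ = r/(a*r) := by ring
  rwa [show r/(a*r) = 1/a by field_simp] at hfin

/-- Theorem `alinfini`(2) for `P^h = -h²d²/dx² + ix²`: for `a` large,
`Im ∫_{-1}^1 √((a+ib) − ix²) dx = 0` has a unique real solution `b`, with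
`|b − 1/3| ≤ C/a`: the curve `Γ_{-1,1}` is asymptotic to `ℝ + i/3`. -/
theorem stmt10 :
    ∃ a₀ : ℝ, 0 < a₀ ∧ ∃ C : ℝ, 0 < C ∧
      ∀ a : ℝ, a₀ ≤ a →
        (∃! b : ℝ,
          (∫ x in (-1:ℝ)..1,
            ((a : ℂ) + (b : ℂ) * Complex.I - Complex.I * (x : ℂ) ^ 2) ^ (1/2 : ℂ)).im
            = 0) ∧
        ∀ b : ℝ,
          (∫ x in (-1:ℝ)..1,
            ((a : ℂ) + (b : ℂ) * Complex.I - Complex.I * (x : ℂ) ^ 2) ^ (1/2 : ℂ)).im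
            = 0 →
          |b - 1/3| ≤ C / a := by
  refine ⟨1, one_pos, 1, one_pos, fun a ha => ?_⟩
  have ha0 : 0 < a := by linarith
  have hP : ∀ b : ℝ,
      ((∫ x in (-1:ℝ)..1,
        ((a : ℂ) + (b : ℂ) * Complex.I - Complex.I * (x : ℂ) ^ 2) ^ (1/2 : ℂ)).im = 0)
      ↔ Ffun a b = 0 := by
    intro b
    rw [im_integral_eq a b ha0]
  -- any zero lies in (-1, 2)
  have hrange : ∀ b : ℝ, Ffun a b = 0 → -1 ≤ b ∧ b ≤ 2 := by
    intro b hb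
    constructor
    · by_contra h
      push_neg at h
      have := (Ffun_mono a ha0 h).trans (Ffun_neg a ha0)
      linarith [hb ▸ this]
    · by_contra h
      push_neg at h
      have := (Ffun_pos a ha0).trans (Ffun_mono a ha0 h)
      linarith [hb ▸ this]
  -- existence
  obtain ⟨b₀, hb₀mem, hb₀⟩ : ∃ b₀ ∈ Icc (-1:ℝ) 2, Ffun a b₀ = 0 := by
    have hsub := intermediate_value_Icc (by norm_num : (-1:ℝ) ≤ 2)
      ((Ffun_cont a ha0).continuousOn)
    have h0mem : (0:ℝ) ∈ Icc (Ffun a (-1)) (Ffun a 2) :=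
      ⟨(Ffun_neg a ha0).le, (Ffun_pos a ha0).le⟩
    obtain ⟨b₀, hmem, heq⟩ := hsub h0mem
    exact ⟨b₀, hmem, heq⟩
  constructor
  · refine ⟨b₀, (hP b₀).2 hb₀, fun b hb => ?_⟩
    have hb' : Ffun a b = 0 := (hP b).1 hb
    by_contra hne
    rcases lt_or_gt_of_ne hne with h | h
    · have := Ffun_mono a ha0 h
      rw [hb', hb₀] at this; exact lt_irrefl 0 this
    · have := Ffun_mono a ha0 h
      rw [hb', hb₀] at this; exact lt_irrefl 0 this
  · intro b hb
    have hb' : Ffun a b = 0 := (hP b).1 hb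
    obtain ⟨h1, h2⟩ := hrange b hb'
    have := zero_bound a b ha h1 h2 hb'
    calc |b - 1/3| ≤ 1/a := this
      _ = 1/a := rfl
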